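/- arXiv:2501.10518 — 5 statements merged into one kernel-verified Lean document; each statement's English description precedes it below -/
import Mathlib

section
/- Let T be a finite rooted tree. Then the simplicial set X^T of admissible subforests of T with layerings of cuts is a 2-Segal set: for every n ≥ 3 and every triangulation 𝒯 of a regular (n+1)-gon by its vertices, the induced map X^T_n → Hom(Δ[𝒯], X^T) is a bijection. -/
/-- A finite rooted tree, encoded as a finite partial order with a least element
(the root) in which the set of elements below any given vertex is totally
ordered.  Edges of the tree are the covering pairs of the order. -/
structure CutTree where
  V : Type
  [fintypeV : Fintype V]
  [decEq : DecidableEq V]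
  [po : PartialOrder V]
  root : V
  root_le : ∀ v : V, root ≤ v
  lower_total : ∀ v a b : V, a ≤ v → b ≤ v → a ≤ b ∨ b ≤ a

attribute [instance] CutTree.fintypeV CutTree.decEq CutTree.po

namespace CutTree

variable (T : CutTree)

/-- A subset of the vertices defines a lower subtree when it is downward closed. -/
def IsLower (L : Set T.V) : Prop := ∀ ⦃a b : T.V⦄, a ≤ b → b ∈ L → a ∈ L

/-- `L` defines a lower subforest of the admissible subforest with vertex set `H`. -/
def IsLowerIn (H L : Set T.V) : Prop :=
  L ⊆ H ∧ ∀ ⦃a b : T.V⦄, a ∈ H → b ∈ L → a ≤ b → a ∈ L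

/-- `H` is the vertex set of an admissible subforest: a difference of two nested
downward closed sets. -/
def IsAdmissible (H : Set T.V) : Prop :=
  ∃ A B : Set T.V, T.IsLower A ∧ T.IsLower B ∧ B ⊆ A ∧ H = A \ B

theorem isLower_empty : T.IsLower (∅ : Set T.V) := fun _ _ _ h => h.elim

theorem isAdmissible_empty : T.IsAdmissible (∅ : Set T.V) :=
  ⟨∅, ∅, T.isLower_empty, T.isLower_empty, le_rfl, by simp⟩

/-- An `n`-simplex of the 2-Segal set `X^T`: an admissible subforest `H = L 0`
together with a layering of cuts `H = L 0 ⊇ L 1 ⊇ ⋯ ⊇ L n = ∅` by lower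
subforests of `H`. -/
@[ext]
structure Simplex (T : CutTree) (n : ℕ) where
  L : Fin (n + 1) → Set T.V
  admissible : T.IsAdmissible (L 0)
  antitone : Antitone L
  lowerIn : ∀ i, T.IsLowerIn (L 0) (L i)
  last_eq : L (Fin.last n) = ∅

theorem isAdmissible_diff {H P Q : Set T.V} (hH : T.IsAdmissible H)
    (hP : T.IsLowerIn H P) (hQ : T.IsLowerIn H Q) (hQP : Q ⊆ P) :
    T.IsAdmissible (P \ Q) := by
  obtain ⟨A, B, hA, hB, hBA, rfl⟩ := hH
  have hlow : ∀ R : Set T.V, T.IsLowerIn (A \ B) R → T.IsLower (R ∪ B) := by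
    rintro R ⟨hRsub, hRcl⟩ a b hab hb
    rcases hb with hb | hb
    · have hbA : b ∈ A := (hRsub hb).1
      have haA : a ∈ A := hA hab hbA
      by_cases haB : a ∈ B
      · exact Or.inr haB
      · exact Or.inl (hRcl ⟨haA, haB⟩ hb hab)
    · exact Or.inr (hB hab hb)
  refine ⟨P ∪ B, Q ∪ B, hlow P hP, hlow Q hQ, Set.union_subset_union_left _ hQP, ?_⟩
  ext x
  constructor
  · rintro ⟨hxP, hxQ⟩
    have hxB : x ∉ B := (hP.1 hxP).2
    exact ⟨Or.inl hxP, by rintro (h | h) <;> [exact hxQ h; exact hxB h]⟩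
  · rintro ⟨hx1, hx2⟩
    rcases hx1 with hx1 | hx1
    · exact ⟨hx1, fun h => hx2 (Or.inl h)⟩
    · exact absurd (Or.inr hx1) hx2

/-- The action of a simplicial operator `α : [m] → [n]` on `X^T`. -/
def act {m n : ℕ} (α : Fin (m + 1) → Fin (n + 1)) (hα : Monotone α)
    (σ : T.Simplex n) : T.Simplex m where
  L j := σ.L (α j) \ σ.L (α (Fin.last m))
  admissible := by
    refine T.isAdmissible_diff σ.admissible (σ.lowerIn _) (σ.lowerIn _) ?_
    exact σ.antitone (hα (Fin.le_last _))
  antitone := by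
    intro j k hjk
    exact Set.diff_subset_diff_left (σ.antitone (hα hjk))
  lowerIn := by
    intro i
    constructor
    · exact Set.diff_subset_diff_left (σ.antitone (hα (Fin.zero_le _)))
    · rintro a b ⟨haL, haS⟩ ⟨hbL, _⟩ hab
      have ha0 : a ∈ σ.L 0 := (σ.lowerIn (α 0)).1 haL
      exact ⟨(σ.lowerIn (α i)).2 ha0 hbL hab, haS⟩
  last_eq := Set.diff_self

/-- The `i`-th face map `X^T_{n+1} → X^T_n`. -/
def face {n : ℕ} (i : Fin (n + 2)) : T.Simplex (n + 1) → T.Simplex n :=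
  T.act i.succAbove (Fin.strictMono_succAbove i).monotone

/-- The `i`-th degeneracy map `X^T_n → X^T_{n+1}`. -/
def degen {n : ℕ} (i : Fin (n + 1)) : T.Simplex n → T.Simplex (n + 1) :=
  T.act i.predAbove (Fin.predAbove_right_monotone i)

end CutTree

/-- A triangulation of a regular `(n+1)`-gon with vertices labelled cyclically
by `0, …, n`: a maximal collection of pairwise non-crossing diagonals. -/
structure Triangulation (n : ℕ) where
  diag : Finset (Fin (n + 1) × Fin (n + 1))
  mem_diag : ∀ p ∈ diag, p.1.val + 1 < p.2.val ∧ ¬(p.1.val = 0 ∧ p.2.val = n)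
  noncross : ∀ p ∈ diag, ∀ q ∈ diag,
    ¬(p.1.val < q.1.val ∧ q.1.val < p.2.val ∧ p.2.val < q.2.val)
  card_eq : diag.card = n - 2

namespace Triangulation

/-- The 1-simplices of `Δ[𝒯]`: sides of the polygon and diagonals of `𝒯`. -/
def IsEdge {n : ℕ} (𝒯 : Triangulation n) (a b : Fin (n + 1)) : Prop :=
  a < b ∧ (b.val = a.val + 1 ∨ (a.val = 0 ∧ b.val = n) ∨ (a, b) ∈ 𝒯.diag)

/-- The 2-simplices (triangles) of `Δ[𝒯]`. -/
def IsTri {n : ℕ} (𝒯 : Triangulation n) (a b c : Fin (n + 1)) : Prop :=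
  𝒯.IsEdge a b ∧ 𝒯.IsEdge b c ∧ 𝒯.IsEdge a c

end Triangulation

namespace CutTree

variable (T : CutTree)

/-- Restriction of an `n`-simplex of `X^T` along the edge from vertex `a` to
vertex `b` of `Δ[n]`. -/
def edgeAct {n : ℕ} (a b : Fin (n + 1)) (hab : a ≤ b) :
    T.Simplex n → T.Simplex 1 :=
  T.act (fun t => if t = 0 then a else b) (by
    intro x y hxy
    by_cases hx : x = 0
    · by_cases hy : y = 0
      · simp [hx, hy]
      · simpa [hx, hy] using hab
    · have hy : y ≠ 0 := fun h => hx (le_antisymm (h ▸ hxy) (Fin.zero_le _))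
      simp [hx, hy])

/-- Restriction of an `n`-simplex of `X^T` along the triangle with vertices
`a ≤ b ≤ c` of `Δ[n]`. -/
def triAct {n : ℕ} (a b c : Fin (n + 1)) (hab : a ≤ b) (hbc : b ≤ c) :
    T.Simplex n → T.Simplex 2 :=
  T.act (fun t => if t = 0 then a else if t = 1 then b else c) (by
    intro x y hxy
    by_cases hx0 : x = 0
    · by_cases hy0 : y = 0
      · simp [hx0, hy0]
      · by_cases hy1 : y = 1
        · simpa [hx0, hy0, hy1] using hab
        · simpa [hx0, hy0, hy1] using hab.trans hbc
    · by_cases hx1 : x = 1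
      · by_cases hy0 : y = 0
        · exact absurd (le_antisymm (hy0 ▸ hxy) (Fin.zero_le _)) hx0
        · by_cases hy1 : y = 1
          · simp [hx1, hy0, hy1]
          · simpa [hx1, hy0, hy1] using hbc
      · have h0 : x.val ≠ 0 := fun h => hx0 (Fin.ext h)
        have h1 : x.val ≠ 1 := fun h => hx1 (Fin.ext h)
        have hx2 : x = 2 := by
          apply Fin.ext
          show x.val = 2
          have := x.isLt
          omega
        have hy2 : y = 2 := by
          apply Fin.ext
          show y.val = 2
          have h2 := Fin.le_def.mp hxy
          have h3 : x.val = 2 := by rw [hx2]; rfl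
          have := y.isLt
          omega
        simp [hx2, hy2])

end CutTree


private lemma lemA : ∀ (fuel a b : ℕ) (F : Finset (ℕ × ℕ)),
    b - a ≤ fuel →
    (∀ p ∈ F, a ≤ p.1 ∧ p.1 + 2 ≤ p.2 ∧ p.2 ≤ b ∧ ¬(p.1 = a ∧ p.2 = b)) →
    (∀ p ∈ F, ∀ q ∈ F, ¬(p.1 < q.1 ∧ q.1 < p.2 ∧ p.2 < q.2)) →
    F.card ≤ b - a - 2 := by
  intro fuel
  induction fuel with
  | zero =>
    intro a b F hfuel hmem hnc
    rcases F.eq_empty_or_nonempty with rfl | ⟨p, hp⟩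
    · simp
    · have := hmem p hp; omega
  | succ fu ih =>
    intro a b F hfuel hmem hnc
    rcases F.eq_empty_or_nonempty with rfl | hF
    · simp
    obtain ⟨p₀, hp₀, hx⟩ := Finset.exists_mem_eq_inf' hF Prod.fst
    set x := F.inf' hF Prod.fst with hxdef
    have hxmin : ∀ p ∈ F, x ≤ p.1 := fun p hp => Finset.inf'_le _ hp
    have hFx : (F.filter (fun p => p.1 = x)).Nonempty := ⟨p₀, Finset.mem_filter.2 ⟨hp₀, hx.symm⟩⟩
    obtain ⟨q, hq, hy⟩ := Finset.exists_mem_eq_sup' hFx Prod.snd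
    set y := (F.filter (fun p => p.1 = x)).sup' hFx Prod.snd with hydef
    have hqF : q ∈ F := (Finset.mem_filter.1 hq).1
    have hq1 : q.1 = x := (Finset.mem_filter.1 hq).2
    have hymax : ∀ p ∈ F, p.1 = x → p.2 ≤ y :=
      fun p hp h1 => Finset.le_sup' _ (Finset.mem_filter.2 ⟨hp, h1⟩)
    have hqxy : q = (x, y) := by rw [Prod.ext_iff]; exact ⟨hq1, hy.symm⟩
    have hq' : (x, y) ∈ F := hqxy ▸ hqF
    obtain ⟨hax, hxy2, hyb, hnab⟩ := hmem (x, y) hq'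
    simp only at hax hxy2 hyb hnab
    set F1 := F.filter (fun p => p ≠ (x, y) ∧ p.2 ≤ y) with hF1
    set F2 := F.filter (fun p => p ≠ (x, y) ∧ ¬(p.2 ≤ y)) with hF2
    have hcover : F ⊆ insert (x, y) (F1 ∪ F2) := by
      intro p hp
      rcases eq_or_ne p (x, y) with rfl | hne
      · exact Finset.mem_insert_self _ _
      · refine Finset.mem_insert_of_mem (Finset.mem_union.2 ?_)
        by_cases h2 : p.2 ≤ y
        · exact Or.inl (Finset.mem_filter.2 ⟨hp, hne, h2⟩)
        · exact Or.inr (Finset.mem_filter.2 ⟨hp, hne, h2⟩)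
    have hcard : F.card ≤ 1 + (F1.card + F2.card) := by
      have h1 := Finset.card_le_card hcover
      have h2 := Finset.card_insert_le (x, y) (F1 ∪ F2)
      have h3 := Finset.card_union_le F1 F2
      omega
    have hF2ge : ∀ p ∈ F2, y ≤ p.1 := by
      intro p hp
      obtain ⟨hpF, hne, h2⟩ := Finset.mem_filter.1 hp
      by_contra hlt
      push_neg at hlt
      have hx1 : x ≤ p.1 := hxmin p hpF
      rcases eq_or_lt_of_le hx1 with heq | hgt
      · exact h2 (hymax p hpF heq.symm)
      · exact hnc (x, y) hq' p hpF ⟨hgt, hlt, by omega⟩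
    have c1 : F1.card ≤ y - x - 2 := by
      apply ih x y F1 (by omega)
      · intro p hp
        obtain ⟨hpF, hne, h2⟩ := Finset.mem_filter.1 hp
        obtain ⟨k1, k2, k3, k4⟩ := hmem p hpF
        refine ⟨hxmin p hpF, k2, h2, fun ⟨e1, e2⟩ => hne (Prod.ext e1 e2)⟩
      · intro p hp q' hq'
        exact hnc p (Finset.mem_filter.1 hp).1 q' (Finset.mem_filter.1 hq').1
    by_cases hybF : (y, b) ∈ F
    · obtain ⟨_, kyb, _, _⟩ := hmem (y, b) hybF
      simp only at kyb
      have c2 : (F2.erase (y, b)).card ≤ b - y - 2 := by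
        apply ih y b _ (by omega)
        · intro p hp
          have hpF2 := Finset.mem_of_mem_erase hp
          have hpF := (Finset.mem_filter.1 hpF2).1
          obtain ⟨k1, k2, k3, k4⟩ := hmem p hpF
          exact ⟨hF2ge p hpF2, k2, k3, fun ⟨e1, e2⟩ => (Finset.ne_of_mem_erase hp) (Prod.ext e1 e2)⟩
        · intro p hp q' hq'
          exact hnc p (Finset.mem_filter.1 (Finset.mem_of_mem_erase hp)).1 q'
            (Finset.mem_filter.1 (Finset.mem_of_mem_erase hq')).1
      have hce : F2.card ≤ (F2.erase (y, b)).card + 1 := by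
        by_cases h : (y, b) ∈ F2
        · rw [Finset.card_erase_of_mem h]; omega
        · rw [Finset.erase_eq_of_notMem h]; omega
      omega
    · have c2 : F2.card ≤ b - y - 2 := by
        apply ih y b _ (by omega)
        · intro p hp
          have hpF := (Finset.mem_filter.1 hp).1
          obtain ⟨k1, k2, k3, k4⟩ := hmem p hpF
          refine ⟨hF2ge p hp, k2, k3, fun ⟨e1, e2⟩ => hybF ?_⟩
          have : p = (y, b) := Prod.ext e1 e2
          rwa [this] at hpF
        · intro p hp q' hq'
          exact hnc p (Finset.mem_filter.1 hp).1 q' (Finset.mem_filter.1 hq').1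
      omega

namespace Triangulation

variable {n : ℕ} (𝒯 : Triangulation n)

/-- Diagonals lying inside the region cut out by `(a, b)`, excluding `(a, b)` itself. -/
def Inside (a b : ℕ) : Finset (Fin (n + 1) × Fin (n + 1)) :=
  𝒯.diag.filter (fun p => a ≤ p.1.val ∧ p.2.val ≤ b ∧ ¬(p.1.val = a ∧ p.2.val = b))

lemma inside_card_le (a b : ℕ) : (𝒯.Inside a b).card ≤ b - a - 2 := by
  classical
  have hinj : Set.InjOn (fun p : Fin (n+1) × Fin (n+1) => (p.1.val, p.2.val)) (𝒯.Inside a b) := by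
    intro p hp q hq h
    simp only [Prod.ext_iff] at h ⊢
    exact ⟨Fin.ext h.1, Fin.ext h.2⟩
  rw [← Finset.card_image_of_injOn hinj]
  apply lemA (b) a b _ (by omega)
  · intro pp hpp
    obtain ⟨p, hp, rfl⟩ := Finset.mem_image.1 hpp
    obtain ⟨hpd, h1, h2, h3⟩ := Finset.mem_filter.1 hp
    have := 𝒯.mem_diag p hpd
    exact ⟨h1, by omega, h2, h3⟩
  · intro pp hpp qq hqq
    obtain ⟨p, hp, rfl⟩ := Finset.mem_image.1 hpp
    obtain ⟨q, hq, rfl⟩ := Finset.mem_image.1 hqq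
    exact 𝒯.noncross p (Finset.mem_filter.1 hp).1 q (Finset.mem_filter.1 hq).1

lemma inside_zero_n : 𝒯.Inside 0 n = 𝒯.diag := by
  apply Finset.filter_true_of_mem
  intro p hp
  have h1 := 𝒯.mem_diag p hp
  have h2 := p.2.isLt
  exact ⟨Nat.zero_le _, by omega, by omega⟩

lemma split (a b : ℕ) (hab : a + 2 ≤ b) (hb : b ≤ n)
    (hcard : (𝒯.Inside a b).card + 2 = b - a) :
    ∃ m, ∃ (_ : a < m) (_ : m < b),
      (m = a + 1 ∨ ((⟨a, by omega⟩, ⟨m, by omega⟩) ∈ 𝒯.diag ∧ (𝒯.Inside a m).card + 2 = m - a)) ∧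
      (b = m + 1 ∨ ((⟨m, by omega⟩, ⟨b, by omega⟩) ∈ 𝒯.diag ∧ (𝒯.Inside m b).card + 2 = b - m)) ∧
      (∀ p ∈ 𝒯.Inside a b, p.2.val ≤ m ∨ m ≤ p.1.val) := by
  classical
  have hbn : b < n + 1 := by omega
  set fb : Fin (n+1) := ⟨b, hbn⟩ with hfb
  set S : Finset (Fin (n+1)) :=
    Finset.univ.filter (fun x => a < x.val ∧ x.val < b ∧ (x.val + 1 = b ∨ (x, fb) ∈ 𝒯.diag))
    with hS
  have hSne : S.Nonempty := by
    refine ⟨⟨b - 1, by omega⟩, Finset.mem_filter.2 ⟨Finset.mem_univ _, ?_, ?_, Or.inl ?_⟩⟩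
    · show a < b - 1; omega
    · show b - 1 < b; omega
    · show b - 1 + 1 = b; omega
  set fm : Fin (n+1) := S.min' hSne with hfm
  have hfmS := S.min'_mem hSne
  obtain ⟨-, ham, hmb, hmedge⟩ := Finset.mem_filter.1 hfmS
  set m := fm.val with hm
  have hmin : ∀ x : Fin (n+1), a < x.val → x.val < b → (x, fb) ∈ 𝒯.diag → m ≤ x.val := by
    intro x h1 h2 h3
    exact S.min'_le x (Finset.mem_filter.2 ⟨Finset.mem_univ _, h1, h2, Or.inr h3⟩)
  set P1 := (𝒯.Inside a b).filter (fun p => p.2.val ≤ m) with hP1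
  set P2 := (𝒯.Inside a b).filter (fun p => ¬(p.2.val ≤ m)) with hP2
  have hsplit : P1.card + P2.card = (𝒯.Inside a b).card :=
    Finset.card_filter_add_card_filter_not _
  have hP2ge : ∀ p ∈ P2, m ≤ p.1.val := by
    intro p hp
    obtain ⟨hpin, h2⟩ := Finset.mem_filter.1 hp
    obtain ⟨hpd, k1, k2, k3⟩ := Finset.mem_filter.1 hpin
    have hgap := (𝒯.mem_diag p hpd).1
    by_contra hlt
    push_neg at hlt
    rcases eq_or_lt_of_le k2 with heq | hltb
    · have hp2 : p.2 = fb := Fin.ext heq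
      have ha1 : a < p.1.val := by
        rcases eq_or_lt_of_le k1 with e | e
        · exact absurd ⟨e.symm, heq⟩ k3
        · exact e
      have := hmin p.1 ha1 (by omega) (by rwa [← hp2])
      omega
    · rcases hmedge with hside | hdiag
      · omega
      · exact 𝒯.noncross p hpd (fm, fb) hdiag ⟨hlt, by show m < p.2.val; omega, hltb⟩
  have hcover : ∀ p ∈ 𝒯.Inside a b, p.2.val ≤ m ∨ m ≤ p.1.val := by
    intro p hp
    by_cases h : p.2.val ≤ m
    · exact Or.inl h
    · exact Or.inr (hP2ge p (Finset.mem_filter.2 ⟨hp, h⟩))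
  have han : a < n + 1 := by omega
  set fa : Fin (n+1) := ⟨a, han⟩ with hfa
  have hmn : m < n + 1 := by omega
  set fm' : Fin (n+1) := ⟨m, hmn⟩ with hfm'
  have hfmeq : fm' = fm := Fin.ext rfl
  have hE1 : 𝒯.Inside a m = P1.erase (fa, fm') := by
    ext p
    simp only [Inside, Finset.mem_erase, Finset.mem_filter, hP1]
    constructor
    · rintro ⟨hpd, k1, k2, k3⟩
      refine ⟨?_, ⟨⟨hpd, k1, by omega, by omega⟩, k2⟩⟩
      rintro rfl
      exact k3 ⟨rfl, rfl⟩
    · rintro ⟨hne, ⟨⟨hpd, k1, k2, k3⟩, k4⟩⟩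
      refine ⟨hpd, k1, k4, ?_⟩
      rintro ⟨e1, e2⟩
      exact hne (by rw [Prod.ext_iff]; exact ⟨Fin.ext e1, Fin.ext e2⟩)
  have hE2 : 𝒯.Inside m b = P2.erase (fm', fb) := by
    ext p
    simp only [Inside, Finset.mem_erase, Finset.mem_filter, hP2]
    constructor
    · rintro ⟨hpd, k1, k2, k3⟩
      have hgap := (𝒯.mem_diag p hpd).1
      refine ⟨?_, ⟨⟨hpd, by omega, k2, ?_⟩, by omega⟩⟩
      · rintro rfl
        exact k3 ⟨rfl, rfl⟩
      · rintro ⟨e1, e2⟩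
        omega
    · rintro ⟨hne, ⟨⟨hpd, k1, k2, k3⟩, k4⟩⟩
      refine ⟨hpd, hP2ge p (Finset.mem_filter.2 ⟨Finset.mem_filter.2 ⟨hpd, k1, k2, k3⟩, k4⟩), k2, ?_⟩
      rintro ⟨e1, e2⟩
      exact hne (by rw [Prod.ext_iff]; exact ⟨Fin.ext e1, Fin.ext e2⟩)
  have hb1 : (𝒯.Inside a m).card ≤ m - a - 2 := 𝒯.inside_card_le a m
  have hb2 : (𝒯.Inside m b).card ≤ b - m - 2 := 𝒯.inside_card_le m b
  have hmem1 : (fa, fm') ∈ P1 ↔ (fa, fm') ∈ 𝒯.diag := by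
    constructor
    · intro h; exact (Finset.mem_filter.1 (Finset.mem_filter.1 h).1).1
    · intro hd
      refine Finset.mem_filter.2 ⟨Finset.mem_filter.2 ⟨hd, ?_, ?_, ?_⟩, ?_⟩
      · show a ≤ a; omega
      · show m ≤ b; omega
      · show ¬(a = a ∧ m = b); omega
      · show m ≤ m; omega
  have hmem2 : (fm', fb) ∈ P2 ↔ (fm', fb) ∈ 𝒯.diag := by
    constructor
    · intro h; exact (Finset.mem_filter.1 (Finset.mem_filter.1 h).1).1
    · intro hd
      have hgap : m + 1 < b := (𝒯.mem_diag _ hd).1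
      refine Finset.mem_filter.2 ⟨Finset.mem_filter.2 ⟨hd, ?_, ?_, ?_⟩, ?_⟩
      · show a ≤ m; omega
      · show b ≤ b; omega
      · show ¬(m = a ∧ b = b); omega
      · show ¬(b ≤ m); omega
  have hcard1 : P1.card = (𝒯.Inside a m).card + (if (fa, fm') ∈ 𝒯.diag then 1 else 0) := by
    by_cases h : (fa, fm') ∈ 𝒯.diag
    · rw [if_pos h]
      have hmm := hmem1.2 h
      rw [hE1, Finset.card_erase_of_mem hmm]
      have : 1 ≤ P1.card := Finset.card_pos.2 ⟨_, hmm⟩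
      omega
    · rw [if_neg h, hE1, Finset.erase_eq_of_notMem (fun hmm => h (hmem1.1 hmm))]
      omega
  have hcard2 : P2.card = (𝒯.Inside m b).card + (if (fm', fb) ∈ 𝒯.diag then 1 else 0) := by
    by_cases h : (fm', fb) ∈ 𝒯.diag
    · rw [if_pos h]
      have hmm := hmem2.2 h
      rw [hE2, Finset.card_erase_of_mem hmm]
      have : 1 ≤ P2.card := Finset.card_pos.2 ⟨_, hmm⟩
      omega
    · rw [if_neg h, hE2, Finset.erase_eq_of_notMem (fun hmm => h (hmem2.1 hmm))]
      omega
  by_cases h1 : (fa, fm') ∈ 𝒯.diag <;> by_cases h2 : (fm', fb) ∈ 𝒯.diag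
  · have g1 : a + 1 < m := (𝒯.mem_diag _ h1).1
    have g2 : m + 1 < b := (𝒯.mem_diag _ h2).1
    rw [if_pos h1] at hcard1
    rw [if_pos h2] at hcard2
    exact ⟨m, ham, hmb, Or.inr ⟨h1, by omega⟩, Or.inr ⟨h2, by omega⟩, hcover⟩
  · have g1 : a + 1 < m := (𝒯.mem_diag _ h1).1
    rw [if_pos h1] at hcard1
    rw [if_neg h2] at hcard2
    exact ⟨m, ham, hmb, Or.inr ⟨h1, by omega⟩, Or.inl (by omega), hcover⟩
  · have g2 : m + 1 < b := (𝒯.mem_diag _ h2).1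
    rw [if_neg h1] at hcard1
    rw [if_pos h2] at hcard2
    exact ⟨m, ham, hmb, Or.inl (by omega), Or.inr ⟨h2, by omega⟩, hcover⟩
  · rw [if_neg h1] at hcard1
    rw [if_neg h2] at hcard2
    exact ⟨m, ham, hmb, Or.inl (by omega), Or.inl (by omega), hcover⟩

lemma inv : ∀ (fuel a b : ℕ), b - a ≤ fuel → b ≤ n → (𝒯.Inside a b).card + 2 = b - a →
    ∀ p ∈ 𝒯.Inside a b,
      (𝒯.Inside p.1.val p.2.val).card + 2 = p.2.val - p.1.val := by
  intro fuel
  induction fuel with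
  | zero => intro a b h1 _ h2 p hp; omega
  | succ fu ih =>
    intro a b hfuel hb hcard p hp
    have hab : a + 2 ≤ b := by omega
    obtain ⟨m, ham, hmb, hleft, hright, hcover⟩ := 𝒯.split a b hab hb hcard
    obtain ⟨hpd, k1, k2, k3⟩ := Finset.mem_filter.1 hp
    have hgap := (𝒯.mem_diag p hpd).1
    rcases hcover p hp with hc | hc
    · -- p inside [a, m]
      rcases hleft with rfl | ⟨hd, hinv⟩
      · omega
      · by_cases hpe : p.1.val = a ∧ p.2.val = m
        · have hp1 : p = (⟨a, by omega⟩, ⟨m, by omega⟩) := by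
            rw [Prod.ext_iff]; exact ⟨Fin.ext hpe.1, Fin.ext hpe.2⟩
          rw [hp1]
          simpa using hinv
        · refine ih a m (by omega) (by omega) hinv p ?_
          exact Finset.mem_filter.2 ⟨hpd, k1, hc, hpe⟩
    · -- p inside [m, b]
      rcases hright with rfl | ⟨hd, hinv⟩
      · omega
      · by_cases hpe : p.1.val = m ∧ p.2.val = b
        · have hp1 : p = (⟨m, by omega⟩, ⟨b, by omega⟩) := by
            rw [Prod.ext_iff]; exact ⟨Fin.ext hpe.1, Fin.ext hpe.2⟩
          rw [hp1]
          simpa using hinv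
        · refine ih m b (by omega) (by omega) hinv p ?_
          exact Finset.mem_filter.2 ⟨hpd, hc, k2, hpe⟩

end Triangulation

section Main

variable (T : CutTree) {n : ℕ} (𝒯 : Triangulation n)

private lemma aux_diff_helper {α : Type*} (A B C : Set α) (h : C ⊆ B) :
    A \ B = (A \ C) \ (B \ C) := by
  ext u
  simp only [Set.mem_diff]
  constructor
  · rintro ⟨h1, h2⟩
    exact ⟨⟨h1, fun hc => h2 (h hc)⟩, fun hh => h2 hh.1⟩
  · rintro ⟨⟨h1, h2⟩, h3⟩
    exact ⟨h1, fun hb => h3 ⟨hb, h2⟩⟩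

private lemma aux_side_edge {k : ℕ} (hk : k < n) :
    𝒯.IsEdge ⟨k, by omega⟩ ⟨k + 1, by omega⟩ :=
  ⟨Fin.mk_lt_mk.2 (by omega), Or.inl rfl⟩

/-- The set attached by edge data `g` to the `k`-th side of the polygon. -/
private def sideSet (g : ∀ a b : Fin (n + 1), 𝒯.IsEdge a b → T.Simplex 1) (k : ℕ) : Set T.V :=
  if h : k < n then (g ⟨k, by omega⟩ ⟨k + 1, by omega⟩ (aux_side_edge 𝒯 h)).L 0 else ∅

private lemma keyD (g : ∀ a b : Fin (n + 1), 𝒯.IsEdge a b → T.Simplex 1)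
    (f : ∀ a b c : Fin (n + 1), 𝒯.IsTri a b c → T.Simplex 2)
    (hcomp : ∀ (a b c : Fin (n + 1)) (h : 𝒯.IsTri a b c),
        T.edgeAct (0 : Fin 3) 1 (by decide) (f a b c h) = g a b h.1 ∧
        T.edgeAct (1 : Fin 3) 2 (by decide) (f a b c h) = g b c h.2.1 ∧
        T.edgeAct (0 : Fin 3) 2 (by decide) (f a b c h) = g a c h.2.2) :
    ∀ (fuel a b : ℕ) (hab : a < b) (hb : b ≤ n)
      (hinv : b = a + 1 ∨ (𝒯.Inside a b).card + 2 = b - a), b - a ≤ fuel →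
      ∀ (hE : 𝒯.IsEdge ⟨a, by omega⟩ ⟨b, by omega⟩),
      ((g ⟨a, by omega⟩ ⟨b, by omega⟩ hE).L 0 = ⋃ k ∈ Finset.Ico a b, sideSet T 𝒯 g k) ∧
      (∀ j k : ℕ, a ≤ j → j < k → k < b → ∀ u v : T.V,
         u ∈ sideSet T 𝒯 g j → v ∈ sideSet T 𝒯 g k → u ≤ v → False) := by
  intro fuel
  induction fuel with
  | zero =>
    intro a b hab hb hinv hfuel hE
    exact absurd hfuel (by omega)
  | succ fu ih =>
    intro a b hab hb hinv hfuel hE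
    rcases hinv with rfl | hcard
    · constructor
      · rw [Nat.Ico_succ_singleton, Finset.set_biUnion_singleton]
        rw [sideSet, dif_pos (show a < n by omega)]
      · intro j k hj hjk hkb
        omega
    · have hab2 : a + 2 ≤ b := by omega
      obtain ⟨m, ham, hmb, hleft, hright, -⟩ := 𝒯.split a b hab2 hb hcard
      have hEam : 𝒯.IsEdge ⟨a, by omega⟩ ⟨m, by omega⟩ := by
        rcases hleft with rfl | ⟨hd, -⟩
        · exact aux_side_edge 𝒯 (by omega)
        · exact ⟨Fin.mk_lt_mk.2 ham, Or.inr (Or.inr hd)⟩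
      have hEmb : 𝒯.IsEdge ⟨m, by omega⟩ ⟨b, by omega⟩ := by
        rcases hright with rfl | ⟨hd, -⟩
        · exact aux_side_edge 𝒯 (by omega)
        · exact ⟨Fin.mk_lt_mk.2 hmb, Or.inr (Or.inr hd)⟩
      have htri : 𝒯.IsTri ⟨a, by omega⟩ ⟨m, by omega⟩ ⟨b, by omega⟩ := ⟨hEam, hEmb, hE⟩
      obtain ⟨c1, c2, c3⟩ := hcomp _ _ _ htri
      set t : T.Simplex 2 := f _ _ _ htri with hft
      have hL2 : t.L 2 = ∅ := t.last_eq
      have hc1 : t.L 0 \ t.L 1 = (g ⟨a, by omega⟩ ⟨m, by omega⟩ hEam).L 0 :=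
        congrArg (fun s : T.Simplex 1 => s.L 0) c1
      have hc2 : t.L 1 = (g ⟨m, by omega⟩ ⟨b, by omega⟩ hEmb).L 0 := by
        have h := congrArg (fun s : T.Simplex 1 => s.L 0) c2
        rw [← h]
        show t.L 1 = t.L 1 \ t.L 2
        rw [hL2, Set.diff_empty]
      have hc3 : t.L 0 = (g ⟨a, by omega⟩ ⟨b, by omega⟩ hE).L 0 := by
        have h := congrArg (fun s : T.Simplex 1 => s.L 0) c3
        rw [← h]
        show t.L 0 = t.L 0 \ t.L 2
        rw [hL2, Set.diff_empty]
      have hsub : t.L 1 ⊆ t.L 0 := t.antitone (show (0 : Fin 3) ≤ 1 by decide)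
      -- left union and left part-2
      have hUL : (⋃ k ∈ Finset.Ico a m, sideSet T 𝒯 g k) = t.L 0 \ t.L 1 := by
        rcases hleft with rfl | ⟨hd, hinv1⟩
        · rw [Nat.Ico_succ_singleton, Finset.set_biUnion_singleton]
          rw [hc1, sideSet, dif_pos (show a < n by omega)]
        · rw [← (ih a m ham (by omega) (Or.inr hinv1) (by omega) hEam).1, hc1]
      have hPL : ∀ j k : ℕ, a ≤ j → j < k → k < m → ∀ u v : T.V,
          u ∈ sideSet T 𝒯 g j → v ∈ sideSet T 𝒯 g k → u ≤ v → False := by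
        rcases hleft with rfl | ⟨hd, hinv1⟩
        · intro j k hj hjk hkm; omega
        · exact (ih a m ham (by omega) (Or.inr hinv1) (by omega) hEam).2
      have hUR : (⋃ k ∈ Finset.Ico m b, sideSet T 𝒯 g k) = t.L 1 := by
        rcases hright with rfl | ⟨hd, hinv1⟩
        · rw [Nat.Ico_succ_singleton, Finset.set_biUnion_singleton]
          rw [hc2, sideSet, dif_pos (show m < n by omega)]
        · rw [← (ih m b hmb hb (Or.inr hinv1) (by omega) hEmb).1, hc2]
      have hPR : ∀ j k : ℕ, m ≤ j → j < k → k < b → ∀ u v : T.V,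
          u ∈ sideSet T 𝒯 g j → v ∈ sideSet T 𝒯 g k → u ≤ v → False := by
        rcases hright with rfl | ⟨hd, hinv1⟩
        · intro j k hj hjk hkm; omega
        · exact (ih m b hmb hb (Or.inr hinv1) (by omega) hEmb).2
      constructor
      · rw [← hc3, ← Finset.Ico_union_Ico_eq_Ico (le_of_lt ham) (le_of_lt hmb),
          Finset.set_biUnion_union, hUL, hUR]
        exact (Set.diff_union_of_subset hsub).symm
      · intro j k hj hjk hkb u v hu hv huv
        rcases Nat.lt_or_ge k m with hkm | hkm
        · exact hPL j k hj hjk hkm u v hu hv huv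
        · rcases Nat.lt_or_ge j m with hjm | hjm
          · have hu' : u ∈ t.L 0 \ t.L 1 := by
              rw [← hUL]
              exact Set.mem_biUnion (Finset.mem_Ico.2 ⟨hj, hjm⟩) hu
            have hv' : v ∈ t.L 1 := by
              rw [← hUR]
              exact Set.mem_biUnion (Finset.mem_Ico.2 ⟨hkm, hkb⟩) hv
            exact hu'.2 ((t.lowerIn 1).2 hu'.1 hv' huv)
          · exact hPR j k hjm hjk hkb u v hu hv huv

end Main

section Main2

variable (T : CutTree) {n : ℕ} (𝒯 : Triangulation n)

/-- Consecutive difference sets of a simplex. -/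
private def consec (z : T.Simplex n) (k : ℕ) : Set T.V :=
  if h : k < n then z.L ⟨k, by omega⟩ \ z.L ⟨k + 1, by omega⟩ else ∅

private lemma telescope (z : T.Simplex n) :
    ∀ (d v : ℕ) (hvd : v + d = n),
      z.L ⟨v, by omega⟩ = ⋃ k ∈ Finset.Ico v n, consec T z k := by
  intro d
  induction d with
  | zero =>
    intro v hv
    have hvn : v = n := by omega
    subst hvn
    have he : (⟨v, by omega⟩ : Fin (v + 1)) = Fin.last v := Fin.ext (by simp [Fin.last])
    rw [he, z.last_eq, Finset.Ico_self]
    simp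
  | succ d ih =>
    intro v hv
    have hvn : v < n := by omega
    have hstep : z.L ⟨v, by omega⟩ = consec T z v ∪ z.L ⟨v + 1, by omega⟩ := by
      rw [consec, dif_pos hvn]
      exact (Set.diff_union_of_subset (z.antitone (Fin.mk_le_mk.2 (by omega)))).symm
    rw [hstep, ih (v + 1) (by omega), ← Finset.insert_Ico_add_one_left_eq_Ico hvn,
      Finset.set_biUnion_insert]

private lemma keyF (x y : T.Simplex n)
    (hagree : ∀ (a b c : Fin (n + 1)) (h : 𝒯.IsTri a b c),
      T.triAct a b c h.1.1.le h.2.1.1.le x = T.triAct a b c h.1.1.le h.2.1.1.le y) :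
    ∀ (fuel a b : ℕ) (hab : a + 2 ≤ b) (hb : b ≤ n)
      (hcard : (𝒯.Inside a b).card + 2 = b - a), b - a ≤ fuel →
      𝒯.IsEdge ⟨a, by omega⟩ ⟨b, by omega⟩ →
      (x.L ⟨a, by omega⟩ \ x.L ⟨b, by omega⟩ = y.L ⟨a, by omega⟩ \ y.L ⟨b, by omega⟩) ∧
      ∀ (k : ℕ) (hk1 : a ≤ k) (hk2 : k < b),
        x.L ⟨k, by omega⟩ \ x.L ⟨k + 1, by omega⟩ = y.L ⟨k, by omega⟩ \ y.L ⟨k + 1, by omega⟩ := by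
  intro fuel
  induction fuel with
  | zero =>
    intro a b hab hb hcard hfuel hE
    exact absurd hfuel (by omega)
  | succ fu ih =>
    intro a b hab hb hcard hfuel hE
    obtain ⟨m, ham, hmb, hleft, hright, -⟩ := 𝒯.split a b hab hb hcard
    have hEam : 𝒯.IsEdge ⟨a, by omega⟩ ⟨m, by omega⟩ := by
      rcases hleft with rfl | ⟨hd, -⟩
      · exact aux_side_edge 𝒯 (by omega)
      · exact ⟨Fin.mk_lt_mk.2 ham, Or.inr (Or.inr hd)⟩
    have hEmb : 𝒯.IsEdge ⟨m, by omega⟩ ⟨b, by omega⟩ := by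
      rcases hright with rfl | ⟨hd, -⟩
      · exact aux_side_edge 𝒯 (by omega)
      · exact ⟨Fin.mk_lt_mk.2 hmb, Or.inr (Or.inr hd)⟩
    have htri : 𝒯.IsTri ⟨a, by omega⟩ ⟨m, by omega⟩ ⟨b, by omega⟩ := ⟨hEam, hEmb, hE⟩
    have ht := hagree _ _ _ htri
    have E0 : x.L ⟨a, by omega⟩ \ x.L ⟨b, by omega⟩ = y.L ⟨a, by omega⟩ \ y.L ⟨b, by omega⟩ :=
      congrArg (fun s : T.Simplex 2 => s.L 0) ht
    have E1 : x.L ⟨m, by omega⟩ \ x.L ⟨b, by omega⟩ = y.L ⟨m, by omega⟩ \ y.L ⟨b, by omega⟩ :=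
      congrArg (fun s : T.Simplex 2 => s.L 1) ht
    have Eam : x.L ⟨a, by omega⟩ \ x.L ⟨m, by omega⟩ = y.L ⟨a, by omega⟩ \ y.L ⟨m, by omega⟩ := by
      rw [aux_diff_helper _ _ (x.L ⟨b, by omega⟩) (x.antitone (Fin.mk_le_mk.2 (by omega))),
        aux_diff_helper _ _ (y.L ⟨b, by omega⟩) (y.antitone (Fin.mk_le_mk.2 (by omega))),
        E0, E1]
    refine ⟨E0, ?_⟩
    intro k hk hkb
    rcases Nat.lt_or_ge k m with hkm | hkm
    · rcases hleft with hm1 | ⟨hd, hinv1⟩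
      · obtain rfl : k = a := by omega
        have : m = k + 1 := hm1
        subst this
        exact Eam
      · exact (ih a m (by have := (𝒯.mem_diag _ hd).1; omega) (by omega) hinv1 (by omega) hEam).2
          k hk hkm
    · rcases hright with hm1 | ⟨hd, hinv1⟩
      · obtain rfl : k = m := by omega
        have : b = k + 1 := hm1
        subst this
        exact E1
      · exact (ih m b (by have := (𝒯.mem_diag _ hd).1; omega) hb hinv1 (by omega) hEmb).2
          k hkm hkb

end Main2

section Final

variable (T : CutTree) {n : ℕ} (𝒯 : Triangulation n)

private lemma aux_edge_inv (hn : 3 ≤ n) (a b : Fin (n + 1)) (hE : 𝒯.IsEdge a b) :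
    b.val = a.val + 1 ∨ (𝒯.Inside a.val b.val).card + 2 = b.val - a.val := by
  obtain ⟨hlt, hcase⟩ := hE
  have hd := 𝒯.card_eq
  rcases hcase with h | ⟨h0, hn'⟩ | h
  · exact Or.inl h
  · right
    rw [h0, hn', 𝒯.inside_zero_n]
    omega
  · right
    have hgap := 𝒯.mem_diag _ h
    have hmem : (a, b) ∈ 𝒯.Inside 0 n :=
      Finset.mem_filter.2 ⟨h, Nat.zero_le _, by have := b.isLt; omega, hgap.2⟩
    exact 𝒯.inv n 0 n (by omega) le_rfl (by rw [𝒯.inside_zero_n]; omega) (a, b) hmem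

theorem treeSimplicialSet_twoSegal' (hn : 3 ≤ n) :
    Function.Injective (fun (x : T.Simplex n) =>
      fun (a b c : Fin (n + 1)) (h : 𝒯.IsTri a b c) =>
        T.triAct a b c h.1.1.le h.2.1.1.le x) ∧
    ∀ (g : ∀ a b : Fin (n + 1), 𝒯.IsEdge a b → T.Simplex 1)
      (f : ∀ a b c : Fin (n + 1), 𝒯.IsTri a b c → T.Simplex 2),
      (∀ (a b c : Fin (n + 1)) (h : 𝒯.IsTri a b c),
        T.edgeAct (0 : Fin 3) 1 (by decide) (f a b c h) = g a b h.1 ∧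
        T.edgeAct (1 : Fin 3) 2 (by decide) (f a b c h) = g b c h.2.1 ∧
        T.edgeAct (0 : Fin 3) 2 (by decide) (f a b c h) = g a c h.2.2) →
      ∃ x : T.Simplex n, ∀ (a b c : Fin (n + 1)) (h : 𝒯.IsTri a b c),
        T.triAct a b c h.1.1.le h.2.1.1.le x = f a b c h := by
  have hE0n : 𝒯.IsEdge ⟨0, by omega⟩ ⟨n, by omega⟩ :=
    ⟨Fin.mk_lt_mk.2 (by omega), Or.inr (Or.inl ⟨rfl, rfl⟩)⟩
  have hinv0 : (𝒯.Inside 0 n).card + 2 = n - 0 := by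
    rw [𝒯.inside_zero_n]
    have := 𝒯.card_eq
    omega
  constructor
  · -- injectivity
    intro x y hxy
    have hagree : ∀ (a b c : Fin (n + 1)) (h : 𝒯.IsTri a b c),
        T.triAct a b c h.1.1.le h.2.1.1.le x = T.triAct a b c h.1.1.le h.2.1.1.le y :=
      fun a b c h => congrFun (congrFun (congrFun (congrFun hxy a) b) c) h
    have h0n := keyF T 𝒯 x y hagree n 0 n (by omega) le_rfl hinv0 (by omega) hE0n
    have hcons : ∀ k : ℕ, consec T x k = consec T y k := by
      intro k
      by_cases hk : k < n
      · rw [consec, consec, dif_pos hk, dif_pos hk]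
        exact h0n.2 k (by omega) hk
      · rw [consec, consec, dif_neg hk, dif_neg hk]
    ext1
    funext v
    have hx : x.L v = ⋃ k ∈ Finset.Ico v.val n, consec T x k :=
      telescope T x (n - v.val) v.val (by have := v.isLt; omega)
    have hy : y.L v = ⋃ k ∈ Finset.Ico v.val n, consec T y k :=
      telescope T y (n - v.val) v.val (by have := v.isLt; omega)
    rw [hx, hy]
    exact Set.iUnion₂_congr fun k _ => hcons k
  · -- surjectivity
    intro g f hcomp
    have hD := keyD T 𝒯 g f hcomp
    have hglob := hD n 0 n (by omega) le_rfl (Or.inr hinv0) (by omega) hE0n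
    -- membership description
    have hmemU : ∀ (p : ℕ) (u : T.V),
        u ∈ (⋃ k ∈ Finset.Ico p n, sideSet T 𝒯 g k) ↔
          ∃ k, p ≤ k ∧ k < n ∧ u ∈ sideSet T 𝒯 g k := by
      intro p u
      constructor
      · intro hu
        simp only [Set.mem_iUnion, exists_prop, Finset.mem_Ico] at hu
        obtain ⟨k, ⟨h1, h2⟩, h3⟩ := hu
        exact ⟨k, h1, h2, h3⟩
      · rintro ⟨k, h1, h2, h3⟩
        exact Set.mem_biUnion (Finset.mem_Ico.2 ⟨h1, h2⟩) h3
    -- the candidate simplex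
    refine ⟨⟨fun v => ⋃ k ∈ Finset.Ico v.val n, sideSet T 𝒯 g k, ?_, ?_, ?_, ?_⟩, ?_⟩
    · -- admissible
      have hadm := (g _ _ hE0n).admissible
      rw [hglob.1] at hadm
      exact hadm
    · -- antitone
      intro i j hij
      refine Set.iUnion₂_subset fun k hk => Set.subset_iUnion₂ (s := fun k _ => sideSet T 𝒯 g k) k ?_
      have hk' := Finset.mem_Ico.1 hk
      exact Finset.mem_Ico.2 ⟨le_trans hij hk'.1, hk'.2⟩
    · -- lowerIn
      intro i
      constructor
      · refine Set.iUnion₂_subset fun k hk => Set.subset_iUnion₂ (s := fun k _ => sideSet T 𝒯 g k) k ?_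
        have hk' := Finset.mem_Ico.1 hk
        exact Finset.mem_Ico.2 ⟨by simp, hk'.2⟩
      · intro u w hu hw huw
        obtain ⟨j, hj0, hjn, hju⟩ := (hmemU _ u).1 hu
        refine (hmemU _ u).2 ?_
        obtain ⟨k, hki, hkn, hkw⟩ := (hmemU _ w).1 hw
        rcases Nat.lt_or_ge j i.val with hji | hji
        · exact absurd huw (fun hle => hglob.2 j k (by omega) (by omega) hkn u w hju hkw hle)
        · exact ⟨j, hji, hjn, hju⟩
    · -- last_eq
      show (⋃ k ∈ Finset.Ico n n, sideSet T 𝒯 g k) = ∅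
      rw [Finset.Ico_self]
      simp
    · -- triangles restrict correctly
      intro a b c h
      have hab : a.val < b.val := h.1.1
      have hbc : b.val < c.val := h.2.1.1
      have hcn : c.val ≤ n := by have := c.isLt; omega
      have hrac := hD n a.val c.val (by omega) hcn (aux_edge_inv 𝒯 hn a c h.2.2) (by omega) h.2.2
      have hrbc := hD n b.val c.val (by omega) hcn (aux_edge_inv 𝒯 hn b c h.2.1) (by omega) h.2.1
      -- difference description
      have hdiff : ∀ p q : ℕ, p ≤ q → q ≤ n →
          ((⋃ k ∈ Finset.Ico p n, sideSet T 𝒯 g k) \ ⋃ k ∈ Finset.Ico q n, sideSet T 𝒯 g k)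
            = ⋃ k ∈ Finset.Ico p q, sideSet T 𝒯 g k := by
        intro p q hpq hqn
        ext u
        constructor
        · intro hu
          obtain ⟨k, hk1, hk2, hk3⟩ := (hmemU p u).1 hu.1
          rcases Nat.lt_or_ge k q with hkq | hkq
          · exact Set.mem_biUnion (Finset.mem_Ico.2 ⟨hk1, hkq⟩) hk3
          · exact absurd ((hmemU q u).2 ⟨k, hkq, hk2, hk3⟩) hu.2
        · intro hu
          have hu' : ∃ k, p ≤ k ∧ k < q ∧ u ∈ sideSet T 𝒯 g k := by
            simp only [Set.mem_iUnion, exists_prop, Finset.mem_Ico] at hu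
            obtain ⟨k, ⟨h1, h2⟩, h3⟩ := hu
            exact ⟨k, h1, h2, h3⟩
          obtain ⟨k, hk1, hk2, hk3⟩ := hu'
          refine ⟨(hmemU p u).2 ⟨k, hk1, by omega, hk3⟩, fun hcon => ?_⟩
          obtain ⟨k', hk1', hk2', hk3'⟩ := (hmemU q u).1 hcon
          exact hglob.2 k k' (by omega) (by omega) hk2' u u hk3 hk3' le_rfl
      obtain ⟨c1, c2, c3⟩ := hcomp a b c h
      set t : T.Simplex 2 := f a b c h with hft
      have hL2 : t.L 2 = ∅ := t.last_eq
      have hfc2 : t.L 1 = (g b c h.2.1).L 0 := by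
        have hh := congrArg (fun s : T.Simplex 1 => s.L 0) c2
        rw [← hh]
        show t.L 1 = t.L 1 \ t.L 2
        rw [hL2, Set.diff_empty]
      have hfc3 : t.L 0 = (g a c h.2.2).L 0 := by
        have hh := congrArg (fun s : T.Simplex 1 => s.L 0) c3
        rw [← hh]
        show t.L 0 = t.L 0 \ t.L 2
        rw [hL2, Set.diff_empty]
      ext1
      funext j
      fin_cases j
      · show (⋃ k ∈ Finset.Ico a.val n, sideSet T 𝒯 g k) \
            (⋃ k ∈ Finset.Ico c.val n, sideSet T 𝒯 g k) = t.L 0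
        rw [hdiff a.val c.val (by omega) hcn, hfc3, hrac.1]
      · show (⋃ k ∈ Finset.Ico b.val n, sideSet T 𝒯 g k) \
            (⋃ k ∈ Finset.Ico c.val n, sideSet T 𝒯 g k) = t.L 1
        rw [hdiff b.val c.val (by omega) hcn, hfc2, hrbc.1]
      · show (⋃ k ∈ Finset.Ico c.val n, sideSet T 𝒯 g k) \
            (⋃ k ∈ Finset.Ico c.val n, sideSet T 𝒯 g k) = t.L 2
        rw [hL2, Set.diff_self]

end Final

/-- For a finite rooted tree `T`, the simplicial set `X^T` of
admissible subforests with layerings of cuts is 2-Segal: for every `n ≥ 3` and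
every triangulation `𝒯` of a regular `(n+1)`-gon by its vertices, the induced
map `X^T_n → Hom(Δ[𝒯], X^T)` is a bijection.  A simplicial map `Δ[𝒯] → X^T`
amounts to a choice of a `1`-simplex for each edge and a `2`-simplex for each
triangle of `𝒯`, compatible along edges (the vertex data is unique since
`X^T_0` is a singleton); the map restricts an `n`-simplex to each triangle. -/
theorem treeSimplicialSet_twoSegal (T : CutTree) (n : ℕ) (hn : 3 ≤ n)
    (𝒯 : Triangulation n) :
    Function.Injective (fun (x : T.Simplex n) =>
      fun (a b c : Fin (n + 1)) (h : 𝒯.IsTri a b c) =>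
        T.triAct a b c h.1.1.le h.2.1.1.le x) ∧
    ∀ (g : ∀ a b : Fin (n + 1), 𝒯.IsEdge a b → T.Simplex 1)
      (f : ∀ a b c : Fin (n + 1), 𝒯.IsTri a b c → T.Simplex 2),
      (∀ (a b c : Fin (n + 1)) (h : 𝒯.IsTri a b c),
        T.edgeAct (0 : Fin 3) 1 (by decide) (f a b c h) = g a b h.1 ∧
        T.edgeAct (1 : Fin 3) 2 (by decide) (f a b c h) = g b c h.2.1 ∧
        T.edgeAct (0 : Fin 3) 2 (by decide) (f a b c h) = g a c h.2.2) →
      ∃ x : T.Simplex n, ∀ (a b c : Fin (n + 1)) (h : 𝒯.IsTri a b c),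
        T.triAct a b c h.1.1.le h.2.1.1.le x = f a b c h := by
  exact treeSimplicialSet_twoSegal' T 𝒯 hn
end

section
/- Let T be a finite rooted tree with underlying graph G = U(T). The assignment sending a layering (F; L_0 ⊇ L_1 ⊇ ⋯ ⊇ L_n) in X^T_n to (U(F); S_1, …, S_n) with S_i = L_{i-1} ∖ L_i defines a simplicial map U : X^T → X^G, i.e., it commutes with all face and degeneracy maps. -/
section GraphCore

variable {V : Type}

theorem telescope_iUnion {m : ℕ} (M : Fin (m + 1) → Set V) (hM : Antitone M) :
    (⋃ j : Fin m, (M j.castSucc \ M j.succ)) = M 0 \ M (Fin.last m) := by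
  ext x
  simp only [Set.mem_iUnion, Set.mem_diff]
  constructor
  · rintro ⟨j, hj1, hj2⟩
    refine ⟨hM (Fin.zero_le _) hj1, fun hx => hj2 (hM (Fin.le_last _) hx)⟩
  · rintro ⟨h0, hlast⟩
    by_contra hno
    push_neg at hno
    have hall : ∀ j : Fin (m + 1), x ∈ M j := by
      intro j
      induction j using Fin.induction with
      | zero => exact h0
      | succ j ih => exact (hno j ih)
    exact hlast (hall _)

theorem disjoint_layers {m : ℕ} (M : Fin (m + 1) → Set V) (hM : Antitone M) :
    ∀ i j : Fin m, i ≠ j →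
      Disjoint (M i.castSucc \ M i.succ) (M j.castSucc \ M j.succ) := by
  have key : ∀ i j : Fin m, i < j →
      Disjoint (M i.castSucc \ M i.succ) (M j.castSucc \ M j.succ) := by
    intro i j hij
    rw [Set.disjoint_left]
    rintro x ⟨_, hxi⟩ ⟨hxj, _⟩
    have : M j.castSucc ⊆ M i.succ := hM (by
      rw [Fin.succ_le_castSucc_iff]; exact hij)
    exact hxi (this hxj)
  intro i j hij
  rcases lt_or_gt_of_ne hij with h | h
  · exact key i j h
  · exact (key j i h).symm

/-- An `n`-simplex of the 2-Segal set `X^G` of a graph `G`: a subgraph `H`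
together with an ordered partition of its vertices into `n` possibly empty
parts. -/
@[ext]
structure GSimplex {V : Type} (G : SimpleGraph V) (n : ℕ) where
  H : G.Subgraph
  S : Fin n → Set V
  cover : (⋃ i, S i) = H.verts
  disj : ∀ i j : Fin n, i ≠ j → Disjoint (S i) (S j)

namespace GSimplex

variable {G : SimpleGraph V}

/-- The chain of "remaining" vertex sets of a partitioned subgraph:
`chain σ j` is the union of the parts with index `≥ j`. -/
def chain {n : ℕ} (σ : GSimplex G n) (j : Fin (n + 1)) : Set V :=
  ⋃ k : Fin n, if j ≤ k.castSucc then σ.S k else ∅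

theorem chain_antitone {n : ℕ} (σ : GSimplex G n) : Antitone σ.chain := by
  intro j j' hjj'
  refine Set.iUnion_subset fun k => ?_
  by_cases h : j' ≤ k.castSucc
  · simp only [h, if_pos]
    exact Set.subset_iUnion_of_subset k (by simp [hjj'.trans h])
  · simp [h]

theorem chain_zero {n : ℕ} (σ : GSimplex G n) : σ.chain 0 = σ.H.verts := by
  rw [← σ.cover]
  unfold chain

  ext k
  simp [Fin.zero_le]

theorem chain_last {n : ℕ} (σ : GSimplex G n) : σ.chain (Fin.last n) = ∅ := by
  unfold chain
  ext x
  simp only [Set.mem_iUnion, Set.mem_empty_iff_false, iff_false]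
  rintro ⟨k, hk⟩
  rw [if_neg] at hk
  · exact hk
  · exact not_le.mpr (Fin.castSucc_lt_last k)

/-- The action of a simplicial operator `α : [m] → [n]` on `X^G`:
the parts are merged or deleted according to `α`, and the subgraph is replaced
by its restriction (spanned subgraph) to the remaining vertices. -/
def act {m n : ℕ} (α : Fin (m + 1) → Fin (n + 1)) (hα : Monotone α)
    (σ : GSimplex G n) : GSimplex G m where
  H := σ.H.induce (σ.chain (α 0) \ σ.chain (α (Fin.last m)))
  S j := σ.chain (α j.castSucc) \ σ.chain (α j.succ)
  cover := by
    have := telescope_iUnion (fun j => σ.chain (α j)) (σ.chain_antitone.comp_monotone hα)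
    simpa using this
  disj := disjoint_layers (fun j => σ.chain (α j)) (σ.chain_antitone.comp_monotone hα)

/-- The `i`-th face map `X^G_{n+1} → X^G_n`. -/
def face {n : ℕ} (i : Fin (n + 2)) : GSimplex G (n + 1) → GSimplex G n :=
  act i.succAbove (Fin.strictMono_succAbove i).monotone

/-- The `i`-th degeneracy map `X^G_n → X^G_{n+1}`. -/
def degen {n : ℕ} (i : Fin (n + 1)) : GSimplex G n → GSimplex G (n + 1) :=
  act i.predAbove (Fin.predAbove_right_monotone i)

/-- The element of `X^G_1` corresponding to a subgraph `H` of `G`. -/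
def ofSubgraph (H : G.Subgraph) : GSimplex G 1 where
  H := H
  S := fun _ => H.verts
  cover := Set.iUnion_const _
  disj := fun i j hij => absurd (Subsingleton.elim i j) hij

end GSimplex

end GraphCore

namespace CutTree

variable (T : CutTree)

/-- The underlying (simple) graph of a rooted tree: the edges are the covering
pairs of the order. -/
def underlying : SimpleGraph T.V := SimpleGraph.fromRel (fun a b => a ⋖ b)

/-- The simplicial map `U : X^T → X^G` sending a layered admissible subforest to
its underlying subgraph together with the vertex partition given by the layers. -/
def Umap {n : ℕ} (σ : T.Simplex n) : GSimplex T.underlying n where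
  H := (⊤ : T.underlying.Subgraph).induce (σ.L 0)
  S j := σ.L j.castSucc \ σ.L j.succ
  cover := by
    have := telescope_iUnion σ.L σ.antitone
    rw [this, σ.last_eq]
    simp [SimpleGraph.Subgraph.induce_verts]
  disj := disjoint_layers σ.L σ.antitone

/-- The degree of a vertex in (the underlying graph of) a rooted tree. -/
noncomputable def degree (v : T.V) : ℕ := Nat.card {w : T.V // v ⋖ w ∨ w ⋖ v}

end CutTree

theorem Umap_chain (T : CutTree) {n : ℕ} (σ : T.Simplex n) (j : Fin (n + 1)) :
    (T.Umap σ).chain j = σ.L j := by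
  ext x
  simp only [GSimplex.chain, CutTree.Umap, Set.mem_iUnion]
  constructor
  · rintro ⟨k, hk⟩
    by_cases h : j ≤ k.castSucc
    · rw [if_pos h] at hk
      exact σ.antitone h hk.1
    · rw [if_neg h] at hk; exact hk.elim
  · intro hx
    by_contra hno
    push_neg at hno
    have hall : ∀ k : Fin (n + 1), j ≤ k → x ∈ σ.L k := by
      intro k
      induction k using Fin.induction with
      | zero => intro hj; exact (Fin.le_zero_iff.mp hj) ▸ hx
      | succ k ih =>
        intro hj
        rcases lt_or_eq_of_le hj with hlt | heq
        · have hjc : j ≤ k.castSucc := Fin.le_castSucc_iff.mpr hlt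
          have hxc : x ∈ σ.L k.castSucc := ih hjc
          have := hno k
          rw [if_pos hjc] at this
          by_contra hxs
          exact this ⟨hxc, hxs⟩
        · exact heq ▸ hx
    have := hall (Fin.last n) (Fin.le_last j)
    rw [σ.last_eq] at this
    exact this

theorem Umap_act (T : CutTree) {m n : ℕ} (α : Fin (m + 1) → Fin (n + 1))
    (hα : Monotone α) (σ : T.Simplex n) :
    T.Umap (T.act α hα σ) = GSimplex.act α hα (T.Umap σ) := by
  have hsub : σ.L (α (Fin.last m)) ⊆ σ.L (α 0) := σ.antitone (hα (Fin.zero_le _))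
  have hS : ∀ j : Fin m,
      (σ.L (α j.castSucc) \ σ.L (α (Fin.last m))) \
        (σ.L (α j.succ) \ σ.L (α (Fin.last m))) =
      σ.L (α j.castSucc) \ σ.L (α j.succ) := by
    intro j
    have hCB : σ.L (α (Fin.last m)) ⊆ σ.L (α j.succ) :=
      σ.antitone (hα (Fin.le_last _))
    ext x
    simp only [Set.mem_diff]
    constructor
    · rintro ⟨⟨hxA, hxC⟩, h2⟩
      refine ⟨hxA, fun hxB => h2 ⟨hxB, hxC⟩⟩
    · rintro ⟨hxA, hxB⟩
      have hxC : x ∉ σ.L (α (Fin.last m)) := fun h => hxB (hCB h)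
      exact ⟨⟨hxA, hxC⟩, fun h => hxB h.1⟩
  refine GSimplex.ext ?_ ?_
  · -- subgraphs
    have h0 : σ.L (α 0) \ σ.L (α (Fin.last m)) ⊆ σ.L 0 :=
      fun x hx => σ.antitone (Fin.zero_le _) hx.1
    show (⊤ : T.underlying.Subgraph).induce ((T.act α hα σ).L 0) =
      (T.Umap σ).H.induce
        ((T.Umap σ).chain (α 0) \ (T.Umap σ).chain (α (Fin.last m)))
    rw [Umap_chain, Umap_chain]
    show (⊤ : T.underlying.Subgraph).induce (σ.L (α 0) \ σ.L (α (Fin.last m))) =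
      ((⊤ : T.underlying.Subgraph).induce (σ.L 0)).induce
        (σ.L (α 0) \ σ.L (α (Fin.last m)))
    apply SimpleGraph.Subgraph.ext
    · rfl
    · ext a b
      simp only [SimpleGraph.Subgraph.induce_adj, SimpleGraph.Subgraph.top_adj]
      constructor
      · rintro ⟨ha, hb, hab⟩
        exact ⟨ha, hb, h0 ha, h0 hb, hab⟩
      · rintro ⟨ha, hb, _, _, hab⟩
        exact ⟨ha, hb, hab⟩
  · -- partitions
    funext j
    show (T.act α hα σ).L j.castSucc \ (T.act α hα σ).L j.succ =
      (T.Umap σ).chain (α j.castSucc) \ (T.Umap σ).chain (α j.succ)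
    rw [Umap_chain, Umap_chain]
    exact hS j

/-- For a finite rooted tree `T` with underlying graph
`G = U(T)`, the assignment sending a layered admissible subforest
`(F; L₀ ⊇ L₁ ⊇ ⋯ ⊇ Lₙ)` to the underlying subgraph together with the vertex
partition `Sᵢ = Lᵢ₋₁ \ Lᵢ` is a simplicial map `U : X^T → X^G`: it commutes
with all face and degeneracy maps. -/
theorem Umap_simplicial (T : CutTree) :
    (∀ (n : ℕ) (i : Fin (n + 2)) (σ : T.Simplex (n + 1)),
      T.Umap (T.face i σ) = GSimplex.face i (T.Umap σ)) ∧
    (∀ (n : ℕ) (i : Fin (n + 1)) (σ : T.Simplex n),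
      T.Umap (T.degen i σ) = GSimplex.degen i (T.Umap σ)) :=
  ⟨fun _ _ σ => Umap_act T _ _ σ, fun _ _ σ => Umap_act T _ _ σ⟩
end

section
/- Let T be a labelled rooted tree with at least two vertices, and G = U(T) its underlying graph. Then the simplicial map U : X^T → X^G is not CULF: the square with vertical maps d_1 : X^T_2 → X^T_1 and d_1 : X^G_2 → X^G_1 and horizontal maps U_2, U_1 is not a pullback of sets. -/
/-- For a labelled rooted tree `T` with at least two vertices
and underlying graph `G = U(T)`, the simplicial map `U : X^T → X^G` is not
CULF: the naturality square for the inner face map `d₁` (comparing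
`d₁ : X^T_2 → X^T_1` with `d₁ : X^G_2 → X^G_1` via `U`) is not a pullback of
sets, i.e. the canonical map from `X^T_2` to the fibre product fails to be a
bijection. -/
theorem Umap_not_CULF (T : CutTree) (hT : 1 < Nat.card T.V) :
    ¬ ((Function.Injective fun σ : T.Simplex 2 => (T.face 1 σ, T.Umap σ)) ∧
      ∀ (a : T.Simplex 1) (b : GSimplex T.underlying 2),
        T.Umap a = GSimplex.face 1 b →
          ∃ σ : T.Simplex 2, T.face 1 σ = a ∧ T.Umap σ = b) := by
  classical
  rintro ⟨-, hsurj⟩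
  -- Since `T` has at least two vertices, pick a vertex covering the root.
  have : Nontrivial T.V := Finite.one_lt_card_iff_nontrivial.mp hT
  obtain ⟨v, hv⟩ := exists_ne T.root
  set p := T.root with hp
  have hpv : p < v := lt_of_le_of_ne (T.root_le v) (Ne.symm hv)
  obtain ⟨q, hq, hqmin⟩ := Finset.exists_minimal
    (s := Finset.univ.filter fun x => p < x) ⟨v, by simpa using hpv⟩
  simp only [Finset.mem_filter, Finset.mem_univ, true_and] at hq
  have hcov : p ⋖ q := ⟨hq, fun c hc1 hc2 => hc2.not_ge (hqmin (by simpa using hc1) hc2.le)⟩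
  have hpq : p ≠ q := ne_of_lt hq
  -- the admissible subforest {p, q}
  set Hset : Set T.V := {p, q} with hHset
  have hAeq : {x : T.V | x ≤ q} = Hset := by
    ext x
    simp only [Set.mem_setOf_eq, hHset, Set.mem_insert_iff, Set.mem_singleton_iff]
    constructor
    · intro hx
      rcases eq_or_lt_of_le hx with h | h
      · exact Or.inr h
      · rcases T.lower_total q x p (le_of_lt h) (T.root_le q) with h2 | h2
        · exact Or.inl (le_antisymm h2 (T.root_le x))
        · rcases eq_or_lt_of_le h2 with h3 | h3
          · exact Or.inl h3.symm
          · exact absurd h (hcov.2 h3)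
    · rintro (rfl | rfl)
      · exact le_of_lt hq
      · exact le_rfl
  have hadm : T.IsAdmissible Hset := by
    refine ⟨{x : T.V | x ≤ q}, ∅, ?_, T.isLower_empty, Set.empty_subset _, by
      rw [hAeq]; simp⟩
    intro a b hab hb
    exact le_trans hab hb
  -- the 1-simplex `a1` on Hset
  have hlowself : T.IsLowerIn Hset Hset := ⟨subset_rfl, fun a b ha _ _ => ha⟩
  have hlowempty : T.IsLowerIn Hset ∅ := ⟨Set.empty_subset _, fun a b _ hb _ => hb.elim⟩
  set a1 : T.Simplex 1 :=
    { L := fun i => if i = 0 then Hset else ∅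
      admissible := by simpa using hadm
      antitone := by
        intro i j hij
        fin_cases i <;> fin_cases j <;> simp_all
      lowerIn := by
        intro i
        fin_cases i
        · simpa using hlowself
        · simpa using hlowempty
      last_eq := by simp [Fin.last] } with ha1
  -- the 2-simplex `b2` of `X^G` with the forbidden layering
  set b2 : GSimplex T.underlying 2 :=
    { H := (⊤ : T.underlying.Subgraph).induce Hset
      S := ![{p}, {q}]
      cover := by
        ext x
        simp [Set.mem_iUnion, Fin.exists_fin_two, hHset]
      disj := by
        intro i j hij
        fin_cases i <;> fin_cases j <;> simp_all [Set.disjoint_left, hpq, hpq.symm] <;> exact fun h => hpq h.symm } with hb2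
  -- compute the chain of b2
  have hchain0 : b2.chain 0 = Hset := by rw [GSimplex.chain_zero]; rfl
  have hchain2 : b2.chain (2 : Fin 3) = ∅ := by
    have : (2 : Fin 3) = Fin.last 2 := rfl
    rw [this, GSimplex.chain_last]
  have hchain1 : b2.chain (1 : Fin 3) = {q} := by
    ext x
    simp only [GSimplex.chain, Set.mem_iUnion, Fin.exists_fin_two]
    constructor
    · rintro (h | h)
      · rw [if_neg (by decide)] at h; exact h.elim
      · rw [if_pos (by decide)] at h
        simpa [hb2] using h
    · intro h
      right
      rw [if_pos (by decide)]
      simpa [hb2] using h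
  -- the naturality condition
  have hface : T.Umap a1 = GSimplex.face 1 b2 := by
    have hα0 : ((1 : Fin 3).succAbove 0) = 0 := by decide
    have hα1 : ((1 : Fin 3).succAbove (Fin.last 1)) = (2 : Fin 3) := by decide
    have hα1' : ((1 : Fin 3).succAbove 1) = (2 : Fin 3) := by decide
    apply GSimplex.ext
    · show (⊤ : T.underlying.Subgraph).induce (a1.L 0) =
        b2.H.induce (b2.chain ((1 : Fin 3).succAbove 0) \
          b2.chain ((1 : Fin 3).succAbove (Fin.last 1)))
      rw [hα0, hα1, hchain0, hchain2, Set.diff_empty]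
      have hL0 : a1.L 0 = Hset := by simp [ha1]
      rw [hL0]
      apply SimpleGraph.Subgraph.ext
      · rfl
      · ext a b
        simp only [hb2, SimpleGraph.Subgraph.induce_adj, SimpleGraph.Subgraph.top_adj]
        tauto
    · funext j
      fin_cases j
      show a1.L 0 \ a1.L 1 = b2.chain ((1 : Fin 3).succAbove ((0 : Fin 1).castSucc)) \
        b2.chain ((1 : Fin 3).succAbove ((0 : Fin 1).succ))
      have e0 : ((0 : Fin 1).castSucc) = (0 : Fin 2) := rfl
      have e1 : ((0 : Fin 1).succ) = (1 : Fin 2) := rfl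
      rw [e0, e1, hα0, hα1', hchain0, hchain2, Set.diff_empty]
      show (if (0 : Fin 2) = 0 then Hset else ∅) \ (if (1 : Fin 2) = 0 then Hset else ∅) = Hset
      rw [if_pos rfl, if_neg (by decide), Set.diff_empty]
  obtain ⟨σ, -, hUσ⟩ := hsurj a1 b2 hface
  -- derive the contradiction: the layering of σ is not by lower subforests
  have hL0 : σ.L 0 = Hset := by
    have := congrArg (fun x => x.H.verts) hUσ
    simpa [CutTree.Umap, hb2] using this
  have hL2 : σ.L (2 : Fin 3) = ∅ := σ.last_eq
  have hS1 : σ.L (1 : Fin 3) = {q} := by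
    have := congrArg (fun x => x.S 1) hUσ
    simp only [CutTree.Umap, hb2] at this
    have h2 : ((1 : Fin 2).succ : Fin 3) = 2 := rfl
    have h1 : ((1 : Fin 2).castSucc : Fin 3) = 1 := rfl
    rw [h1, h2, hL2, Set.diff_empty] at this
    simpa using this
  have hqin : q ∈ σ.L (1 : Fin 3) := by rw [hS1]; exact rfl
  have hpin : p ∈ σ.L 0 := by rw [hL0]; exact Or.inl rfl
  have := (σ.lowerIn (1 : Fin 3)).2 hpin hqin (le_of_lt hq)
  rw [hS1] at this
  exact hpq this
end

section
/- Let T be a labelled rooted tree with at least two vertices and G = U(T). Then the simplicial map U : X^T → X^G is not relatively Segal: the square comparing the Segal maps (d_0, d_2) : X^T_2 → X^T_1 × X^T_1 and (d_0, d_2) : X^G_2 → X^G_1 × X^G_1 via U is not a pullback of sets. -/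
namespace CutTree

theorem isAdmissible_singleton (T : CutTree) (x : T.V) : T.IsAdmissible {x} := by
  refine ⟨{y | y ≤ x}, {y | y < x}, ?_, ?_, fun y hy => le_of_lt hy, ?_⟩
  · intro a b hab hb; exact hab.trans hb
  · intro a b hab hb; exact lt_of_le_of_lt hab hb
  · ext y
    simp only [Set.mem_diff, Set.mem_setOf_eq, Set.mem_singleton_iff, not_lt]
    exact ⟨fun h => by subst h; exact ⟨le_rfl, lt_irrefl _⟩,
      fun h => h.1.lt_or_eq.resolve_left h.2⟩

/-- The 1-simplex of `X^T` given by a singleton admissible subforest. -/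
def single (T : CutTree) (x : T.V) : T.Simplex 1 where
  L := ![{x}, ∅]
  admissible := T.isAdmissible_singleton x
  antitone := by
    intro i j hij
    fin_cases i <;> fin_cases j <;> simp_all
  lowerIn := by
    intro i
    fin_cases i
    · exact ⟨le_rfl, fun a b ha _ _ => ha⟩
    · exact ⟨by simp, fun a b _ hb _ => hb.elim⟩
  last_eq := rfl

end CutTree


/-- For a labelled rooted tree `T` with at least two vertices
and underlying graph `G = U(T)`, the simplicial map `U : X^T → X^G` is not
relatively Segal: the square comparing the Segal maps
`(d₀, d₂) : X^T_2 → X^T_1 × X^T_1` and `(d₀, d₂) : X^G_2 → X^G_1 × X^G_1` via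
`U` is not a pullback of sets. -/
theorem Umap_not_relatively_Segal (T : CutTree) (hT : 1 < Nat.card T.V) :
    ¬ ((Function.Injective fun σ : T.Simplex 2 =>
          ((T.face 0 σ, T.face 2 σ), T.Umap σ)) ∧
      ∀ (a : T.Simplex 1 × T.Simplex 1) (b : GSimplex T.underlying 2),
        (T.Umap a.1, T.Umap a.2) = (GSimplex.face 0 b, GSimplex.face 2 b) →
          ∃ σ : T.Simplex 2, (T.face 0 σ, T.face 2 σ) = a ∧ T.Umap σ = b) := by
  rintro ⟨-, hsurj⟩
  rw [Nat.card_eq_fintype_card] at hT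
  obtain ⟨v, hv⟩ := Fintype.exists_ne_of_one_lt_card hT T.root
  have hlt : T.root < v := lt_of_le_of_ne (T.root_le v) (Ne.symm hv)
  obtain ⟨w, hcov, -⟩ := exists_covBy_le_of_lt hlt
  set u := T.root with hu
  have hne : u ≠ w := hcov.lt.ne
  -- the bad 2-simplex of X^G: two vertices, no edge between them
  set b : GSimplex T.underlying 2 :=
    { H := { verts := {u, w}, Adj := fun _ _ => False,
             adj_sub := False.elim, edge_vert := False.elim, symm := ⟨fun _ _ h => h⟩ }
      S := ![{w}, {u}]
      cover := by
        ext x; simp [Set.mem_iUnion, Fin.exists_fin_two, or_comm]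
      disj := by
        intro i j hij
        fin_cases i <;> fin_cases j <;> simp_all [Set.disjoint_singleton, hne, Ne.symm hne] <;>
          exact fun h => hne h.symm }
    with hb
  have hadj : T.underlying.Adj u w := by
    simp [CutTree.underlying, SimpleGraph.fromRel_adj, hne, hcov]
  have hc0 : b.chain 0 = {u, w} := by rw [GSimplex.chain_zero]
  have hc1 : b.chain 1 = {u} := by
    ext x; simp [GSimplex.chain, Fin.exists_fin_two, hb, Fin.le_def]
  have hc2 : b.chain 2 = ∅ := b.chain_last
  have h01 : Fin.succAbove (0 : Fin 3) 0 = 1 := rfl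
  have h02 : Fin.succAbove (0 : Fin 3) 1 = 2 := rfl
  have h20 : Fin.succAbove (2 : Fin 3) 0 = 0 := rfl
  have h21 : Fin.succAbove (2 : Fin 3) 1 = 1 := rfl
  have hlast : (Fin.last 1) = 1 := rfl
  have hUadj : ∀ (τ : T.Simplex 1) (x : T.V), τ.L 0 = {x} →
      (T.Umap τ).H.Adj = fun _ _ => False := by
    intro τ x hτ
    funext a c
    apply propext
    simp only [CutTree.Umap, SimpleGraph.Subgraph.induce_adj, hτ,
      Set.mem_singleton_iff, SimpleGraph.Subgraph.top_adj, iff_false]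
    rintro ⟨rfl, rfl, h2⟩
    exact (T.underlying.loopless.irrefl _) h2
  have hsetw : ({u, w} : Set T.V) \ {u} = {w} := by
    ext x
    simp only [Set.mem_diff, Set.mem_insert_iff, Set.mem_singleton_iff]
    constructor
    · rintro ⟨h | h, hx⟩
      · exact absurd h hx
      · exact h
    · rintro rfl
      exact ⟨Or.inr rfl, Ne.symm hne⟩
  have key := hsurj (T.single u, T.single w) b ?_
  · obtain ⟨σ, -, hσ⟩ := key
    have hverts : σ.L 0 = {u, w} := by
      have := congrArg (fun τ => τ.H.verts) hσ
      simpa [CutTree.Umap, hb] using this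
    have : (T.Umap σ).H.Adj u w := by
      simp [CutTree.Umap, hverts, hadj]
    rw [hσ] at this
    exact this
  · refine Prod.ext ?_ ?_ <;> dsimp only
    · -- Umap (single u) = face 0 b
      apply GSimplex.ext
      · apply SimpleGraph.Subgraph.ext
        · show ({u} : Set T.V) = _
          simp [GSimplex.face, GSimplex.act, hlast, h01, h02, hc1, hc2]
        · rw [hUadj (T.single u) u rfl]
          funext a c
          apply propext
          simp [GSimplex.face, GSimplex.act, SimpleGraph.Subgraph.induce_adj, hb]
      · funext j
        have : j = 0 := Subsingleton.elim j 0
        subst this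
        show ({u} : Set T.V) \ ∅ = _
        simp [GSimplex.face, GSimplex.act, hlast, h01, h02, hc1, hc2]
    · -- Umap (single w) = face 2 b
      apply GSimplex.ext
      · apply SimpleGraph.Subgraph.ext
        · show ({w} : Set T.V) = _
          simp only [GSimplex.face, GSimplex.act, hlast, h20, h21, hc0, hc1,
            SimpleGraph.Subgraph.induce_verts]
          exact hsetw.symm
        · rw [hUadj (T.single w) w rfl]
          funext a c
          apply propext
          simp only [GSimplex.face, GSimplex.act, SimpleGraph.Subgraph.induce_adj, hb]
          simp
      · funext j
        have : j = 0 := Subsingleton.elim j 0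
        subst this
        show ({w} : Set T.V) \ ∅ = _
        simp only [GSimplex.face, GSimplex.act, hlast, h20, h21, hc0, hc1, Set.diff_empty,
          Fin.castSucc_zero, Fin.succ_zero_eq_one]
        exact hsetw.symm
end

section
/- Let T be a labelled rooted tree and X^T its associated 2-Segal set. For any two elements b, b' ∈ X^T_1 and any b'' ∈ X^T_1, the number of elements c ∈ X^T_2 with d_0(c) = b, d_2(c) = b', and d_1(c) = b'' is at most 1. Consequently, in the Hall algebra of X^T, the product of two basis vectors is either 0 or a single basis vector. -/
namespace CutTree

variable {T : CutTree}

private theorem ext1 {b b' : T.Simplex 1} (h : b.L 0 = b'.L 0) : b = b' := by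
  apply Simplex.ext
  funext j
  fin_cases j
  · exact h
  · rw [show (⟨1, by omega⟩ : Fin 2) = Fin.last 1 from rfl, b.last_eq, b'.last_eq]

private theorem ext2 {c c' : T.Simplex 2} (h0 : c.L 0 = c'.L 0) (h1 : c.L 1 = c'.L 1) :
    c = c' := by
  apply Simplex.ext
  funext j
  fin_cases j
  · exact h0
  · exact h1
  · rw [show (⟨2, by omega⟩ : Fin 3) = Fin.last 2 from rfl, c.last_eq, c'.last_eq]

private theorem face0_L (c : T.Simplex 2) : (T.face 0 c).L 0 = c.L 1 := by
  show c.L ((0 : Fin 3).succAbove 0) \ c.L ((0 : Fin 3).succAbove (Fin.last 1)) = c.L 1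
  rw [show (0 : Fin 3).succAbove 0 = 1 by decide,
    show (0 : Fin 3).succAbove (Fin.last 1) = Fin.last 2 by decide, c.last_eq,
    Set.diff_empty]

private theorem face1_L (c : T.Simplex 2) : (T.face 1 c).L 0 = c.L 0 := by
  show c.L ((1 : Fin 3).succAbove 0) \ c.L ((1 : Fin 3).succAbove (Fin.last 1)) = c.L 0
  rw [show (1 : Fin 3).succAbove 0 = 0 by decide,
    show (1 : Fin 3).succAbove (Fin.last 1) = Fin.last 2 by decide, c.last_eq,
    Set.diff_empty]

private theorem face2_L (c : T.Simplex 2) : (T.face 2 c).L 0 = c.L 0 \ c.L 1 := by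
  show c.L ((2 : Fin 3).succAbove 0) \ c.L ((2 : Fin 3).succAbove (Fin.last 1)) =
    c.L 0 \ c.L 1
  rw [show (2 : Fin 3).succAbove 0 = 0 by decide,
    show (2 : Fin 3).succAbove (Fin.last 1) = 1 by decide]

private theorem face1_eq_union (c : T.Simplex 2) :
    (T.face 1 c).L 0 = (T.face 2 c).L 0 ∪ (T.face 0 c).L 0 := by
  rw [face0_L, face1_L, face2_L, Set.diff_union_of_subset (c.antitone (by decide : (0 : Fin 3) ≤ 1))]

end CutTree

/-- For a labelled rooted tree `T`, the structure constants of
the Hall algebra of `X^T` are all `0` or `1`: for any `b, b', b'' ∈ X^T_1` there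
is at most one `c ∈ X^T_2` with `d₀ c = b`, `d₂ c = b'` and `d₁ c = b''`.
Consequently, the product of two basis vectors in the Hall algebra is either
`0` or a single basis vector. -/
theorem hall_structure_constants_le_one (T : CutTree) :
    (∀ b b' b'' : T.Simplex 1,
      Nat.card {c : T.Simplex 2 //
        T.face 0 c = b ∧ T.face 2 c = b' ∧ T.face 1 c = b''} ≤ 1) ∧
    (∀ b b' : T.Simplex 1,
      (∀ b'' : T.Simplex 1,
        Nat.card {c : T.Simplex 2 //
          T.face 0 c = b ∧ T.face 2 c = b' ∧ T.face 1 c = b''} = 0) ∨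
      (∃ b'' : T.Simplex 1,
        Nat.card {c : T.Simplex 2 //
          T.face 0 c = b ∧ T.face 2 c = b' ∧ T.face 1 c = b''} = 1 ∧
        ∀ b''' : T.Simplex 1, b''' ≠ b'' →
          Nat.card {c : T.Simplex 2 //
            T.face 0 c = b ∧ T.face 2 c = b' ∧ T.face 1 c = b'''} = 0)) := by
  have hsub : ∀ (b b' b'' : T.Simplex 1),
      Subsingleton {c : T.Simplex 2 //
        T.face 0 c = b ∧ T.face 2 c = b' ∧ T.face 1 c = b''} := by
    intro b b' b''
    constructor
    rintro ⟨c, h0, _, h1⟩ ⟨c', h0', _, h1'⟩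
    have hL1 : c.L 1 = c'.L 1 := by
      rw [← CutTree.face0_L c, ← CutTree.face0_L c', h0, h0']
    have hL0 : c.L 0 = c'.L 0 := by
      rw [← CutTree.face1_L c, ← CutTree.face1_L c', h1, h1']
    exact Subtype.ext (CutTree.ext2 hL0 hL1)
  constructor
  · intro b b' b''
    haveI := hsub b b' b''
    rcases isEmpty_or_nonempty {c : T.Simplex 2 //
        T.face 0 c = b ∧ T.face 2 c = b' ∧ T.face 1 c = b''} with h | h
    · rw [Nat.card_of_isEmpty]; omega
    · exact le_of_eq (Nat.card_eq_one_iff_unique.mpr ⟨hsub b b' b'', h⟩)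
  · intro b b'
    by_cases hex : ∃ c : T.Simplex 2, T.face 0 c = b ∧ T.face 2 c = b'
    · obtain ⟨c, h0, h2⟩ := hex
      refine Or.inr ⟨T.face 1 c, ?_, ?_⟩
      · haveI := hsub b b' (T.face 1 c)
        rw [Nat.card_eq_one_iff_unique]
        exact ⟨hsub b b' (T.face 1 c), ⟨c, h0, h2, rfl⟩⟩
      · intro b''' hne
        rw [Nat.card_eq_zero]
        left
        constructor
        rintro ⟨c', h0', h2', h1'⟩
        apply hne
        rw [← h1']
        apply CutTree.ext1
        rw [CutTree.face1_eq_union, CutTree.face1_eq_union, h0, h2, h0', h2']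
    · left
      intro b''
      rw [Nat.card_eq_zero]
      left
      constructor
      rintro ⟨c, h0, h2, _⟩
      exact hex ⟨c, h0, h2⟩
end
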